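/- Let n ≥ 3, s = 1 (shift by one frequency), and suppose k₀ with 1 < k₀ < n−1. There exist x, y ∈ ℂⁿ with x̂[0] = x̂[k₀] = ŷ[0] = ŷ[k₀] = 0, such that x and y produce identical measurements {|Fx|², |F(x+Dx)|², |F(x−iDx)|²}, yet y is not of the form c·x for any unimodular c. -/

import Mathlib

noncomputable def dft {n : ℕ} [NeZero n] (x : ZMod n → ℂ) (k : ZMod n) : ℂ :=
  (Real.sqrt n)⁻¹ * ∑ t : ZMod n,
    x t * Complex.exp (-(2 * Real.pi * Complex.I * (k.val : ℂ) * (t.val : ℂ)) / n)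

noncomputable def modulate {n : ℕ} [NeZero n] (s : ℤ) (x : ZMod n → ℂ) : ZMod n → ℂ :=
  fun t => Complex.exp (2 * Real.pi * Complex.I * (s : ℂ) * (t.val : ℂ) / n) * x t

open Complex Finset

noncomputable def Ech (n : ℕ) [NeZero n] (m : ℤ) : ZMod n → ℂ :=
  fun t => Complex.exp (2 * Real.pi * Complex.I * (m : ℂ) * (t.val : ℂ) / n)

lemma sum_val_eq {n : ℕ} [NeZero n] (f : ℕ → ℂ) :
    ∑ t : ZMod n, f t.val = ∑ j ∈ Finset.range n, f j := by
  apply Finset.sum_nbij' (i := fun (t : ZMod n) => t.val) (j := fun j => ((j : ℕ) : ZMod n))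
  · intro a _; exact Finset.mem_range.mpr (ZMod.val_lt a)
  · intro a _; exact Finset.mem_univ _
  · intro a _; exact ZMod.natCast_rightInverse a
  · intro a ha; exact ZMod.val_cast_of_lt (Finset.mem_range.mp ha)
  · intro a _; rfl

lemma sum_char {n : ℕ} [NeZero n] (m : ℤ) :
    ∑ t : ZMod n, Complex.exp (2 * Real.pi * Complex.I * (m : ℂ) * (t.val : ℂ) / n)
      = if (m : ZMod n) = 0 then (n : ℂ) else 0 := by
  have hn0 : (n : ℂ) ≠ 0 := Nat.cast_ne_zero.mpr (NeZero.ne n)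
  have h2 : (2 * Real.pi * Complex.I : ℂ) ≠ 0 := by
    simp [Real.pi_ne_zero, Complex.I_ne_zero]
  set z : ℂ := Complex.exp (2 * Real.pi * Complex.I * (m : ℂ) / n) with hz
  have hterm : ∀ t : ZMod n,
      Complex.exp (2 * Real.pi * Complex.I * (m : ℂ) * (t.val : ℂ) / n) = z ^ t.val := by
    intro t
    rw [hz, ← Complex.exp_nat_mul]
    congr 1
    ring
  have hsum : ∑ t : ZMod n,
      Complex.exp (2 * Real.pi * Complex.I * (m : ℂ) * (t.val : ℂ) / n)
      = ∑ j ∈ Finset.range n, z ^ j := by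
    simp_rw [hterm]
    exact sum_val_eq (fun j => z ^ j)
  rw [hsum]
  have hz1 : z = 1 ↔ (n : ℤ) ∣ m := by
    rw [hz, Complex.exp_eq_one_iff]
    constructor
    · rintro ⟨k, hk⟩
      have hk' : (2 * Real.pi * Complex.I) * ((m : ℂ) / n) =
          (2 * Real.pi * Complex.I) * (k : ℂ) := by linear_combination hk
      have h3 : (m : ℂ) / n = (k : ℂ) := mul_left_cancel₀ h2 hk'
      have h4 : (m : ℂ) = (k : ℂ) * n := (div_eq_iff hn0).mp h3
      have h5 : (m : ℂ) = ((n * k : ℤ) : ℂ) := by rw [h4]; push_cast; ring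
      exact ⟨k, by exact_mod_cast h5⟩
    · rintro ⟨k, hk⟩
      refine ⟨k, ?_⟩
      rw [hk]
      push_cast
      field_simp
  simp only [ZMod.intCast_zmod_eq_zero_iff_dvd]
  by_cases hdvd : (n : ℤ) ∣ m
  · rw [if_pos hdvd]
    have hz1' : z = 1 := hz1.mpr hdvd
    simp [hz1']
  · rw [if_neg hdvd]
    have hzne : z ≠ 1 := fun h => hdvd (hz1.mp h)
    rw [geom_sum_eq hzne]
    have hzn : z ^ n = 1 := by
      rw [hz, ← Complex.exp_nat_mul]
      have : (n : ℂ) * (2 * Real.pi * Complex.I * (m : ℂ) / n) =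
          (m : ℂ) * (2 * Real.pi * Complex.I) := by field_simp
      rw [this]
      exact_mod_cast Complex.exp_int_mul_two_pi_mul_I m
    simp [hzn]

lemma dft_Ech {n : ℕ} [NeZero n] (m : ℤ) (k : ZMod n) :
    dft (Ech n m) k = if ((m : ZMod n) = k) then ((Real.sqrt n : ℝ) : ℂ) else 0 := by
  have hn0 : 0 < n := Nat.pos_of_ne_zero (NeZero.ne n)
  have hs : (Real.sqrt n : ℝ) ≠ 0 := by
    positivity
  have hcomb : ∀ t : ZMod n,
      Ech n m t * Complex.exp (-(2 * Real.pi * Complex.I * (k.val : ℂ) * (t.val : ℂ)) / n)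
      = Complex.exp (2 * Real.pi * Complex.I * ((m - (k.val : ℤ) : ℤ) : ℂ) * (t.val : ℂ) / n) := by
    intro t
    rw [Ech, ← Complex.exp_add]
    congr 1
    push_cast
    ring
  rw [dft]
  rw [Finset.sum_congr rfl (fun t _ => hcomb t), sum_char]
  have hcond : (((m - (k.val : ℤ) : ℤ) : ZMod n) = 0) ↔ ((m : ZMod n) = k) := by
    have hcast : ((m - (k.val : ℤ) : ℤ) : ZMod n) = (m : ZMod n) - k := by
      push_cast
      rw [ZMod.natCast_val, ZMod.cast_id]
    rw [hcast, sub_eq_zero]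
  by_cases hc : (m : ZMod n) = k
  · rw [if_pos (hcond.mpr hc), if_pos hc]
    norm_cast
    rw [inv_mul_eq_iff_eq_mul₀ hs]
    exact (Real.mul_self_sqrt (by positivity)).symm
  · rw [if_neg (fun h => hc (hcond.mp h)), if_neg hc, mul_zero]

lemma dft_add {n : ℕ} [NeZero n] (f g : ZMod n → ℂ) (k : ZMod n) :
    dft (fun t => f t + g t) k = dft f k + dft g k := by
  simp only [dft, add_mul, Finset.sum_add_distrib, mul_add]

lemma dft_smul {n : ℕ} [NeZero n] (c : ℂ) (f : ZMod n → ℂ) (k : ZMod n) :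
    dft (fun t => c * f t) k = c * dft f k := by
  simp only [dft, mul_assoc, ← Finset.mul_sum]
  ring

lemma dft_comb2 {n : ℕ} [NeZero n] (c d : ℂ) (a b : ℤ) (k : ZMod n) :
    dft (fun t => c * Ech n a t + d * Ech n b t) k
      = c * (if ((a : ZMod n) = k) then ((Real.sqrt n : ℝ) : ℂ) else 0)
      + d * (if ((b : ZMod n) = k) then ((Real.sqrt n : ℝ) : ℂ) else 0) := by
  rw [dft_add (fun t => c * Ech n a t) (fun t => d * Ech n b t), dft_smul, dft_smul,
    dft_Ech, dft_Ech]

lemma dft_comb4 {n : ℕ} [NeZero n] (c₁ c₂ c₃ c₄ : ℂ) (a₁ a₂ a₃ a₄ : ℤ) (k : ZMod n) :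
    dft (fun t => (c₁ * Ech n a₁ t + c₂ * Ech n a₂ t) + (c₃ * Ech n a₃ t + c₄ * Ech n a₄ t)) k
      = (c₁ * (if ((a₁ : ZMod n) = k) then ((Real.sqrt n : ℝ) : ℂ) else 0)
      + c₂ * (if ((a₂ : ZMod n) = k) then ((Real.sqrt n : ℝ) : ℂ) else 0))
      + (c₃ * (if ((a₃ : ZMod n) = k) then ((Real.sqrt n : ℝ) : ℂ) else 0)
      + c₄ * (if ((a₄ : ZMod n) = k) then ((Real.sqrt n : ℝ) : ℂ) else 0)) := by
  rw [dft_add (fun t => c₁ * Ech n a₁ t + c₂ * Ech n a₂ t)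
    (fun t => c₃ * Ech n a₃ t + c₄ * Ech n a₄ t), dft_comb2, dft_comb2]

lemma mod_Ech {n : ℕ} [NeZero n] (m : ℤ) (t : ZMod n) :
    Complex.exp (2 * Real.pi * Complex.I * ((1 : ℤ) : ℂ) * (t.val : ℂ) / n) * Ech n m t
      = Ech n (m + 1) t := by
  rw [Ech, Ech, ← Complex.exp_add]
  congr 1
  push_cast
  ring

lemma int_cast_ne {n : ℕ} [NeZero n] {a b : ℤ} (h1 : a ≠ b) (h2 : -(n : ℤ) < a - b)
    (h3 : a - b < n) : (a : ZMod n) ≠ (b : ZMod n) := by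
  intro he
  rw [ZMod.intCast_eq_intCast_iff, Int.modEq_iff_dvd] at he
  have habs : (n : ℤ) ∣ |a - b| := by rw [abs_sub_comm]; exact (dvd_abs _ _).mpr he
  have h4 : 0 < |a - b| := abs_pos.mpr (sub_ne_zero.mpr h1)
  have h5 := Int.le_of_dvd h4 habs
  have h6 : |a - b| < n := abs_lt.mpr ⟨h2, h3⟩
  omega

lemma abs_ite2 {n : ℕ} [NeZero n] (A B : ZMod n) (hAB : A ≠ B)
    (c₁ c₂ d₁ d₂ : ℂ)
    (h₁ : ‖d₁‖ = ‖c₁‖) (h₂ : ‖d₂‖ = ‖c₂‖)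
    (s : ℂ) (k : ZMod n) :
    ‖d₁ * (if A = k then s else 0) + d₂ * (if B = k then s else 0)‖
    = ‖c₁ * (if A = k then s else 0) + c₂ * (if B = k then s else 0)‖ := by
  by_cases hA : A = k
  · have hB : ¬ B = k := fun h => hAB (hA.trans h.symm)
    simp [hA, hB, map_mul, h₁]
  · by_cases hB : B = k
    · simp [hA, hB, map_mul, h₂]
    · simp [hA, hB]

lemma comb2_mod {n : ℕ} [NeZero n] (c d : ℂ) (a b : ℤ) (t : ZMod n) :
    (c * Ech n a t + d * Ech n b t)
      + modulate 1 (fun t => c * Ech n a t + d * Ech n b t) t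
    = (c * Ech n a t + c * Ech n (a + 1) t) + (d * Ech n b t + d * Ech n (b + 1) t) := by
  simp only [modulate]
  linear_combination c * mod_Ech a t + d * mod_Ech b t

lemma comb2_modI {n : ℕ} [NeZero n] (c d : ℂ) (a b : ℤ) (t : ZMod n) :
    (c * Ech n a t + d * Ech n b t)
      - Complex.I * modulate 1 (fun t => c * Ech n a t + d * Ech n b t) t
    = (c * Ech n a t + (-(Complex.I * c)) * Ech n (a + 1) t)
      + (d * Ech n b t + (-(Complex.I * d)) * Ech n (b + 1) t) := by
  simp only [modulate]
  linear_combination (-(Complex.I * c)) * mod_Ech a t + (-(Complex.I * d)) * mod_Ech b t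

lemma abs_four {n : ℕ} [NeZero n] (A B C D : ZMod n)
    (hAB : A ≠ B) (hAC : A ≠ C) (hAD : A ≠ D) (hBC : B ≠ C) (hBD : B ≠ D) (hCD : C ≠ D)
    (c₁ c₂ c₃ c₄ d₁ d₂ d₃ d₄ : ℂ)
    (h₁ : ‖d₁‖ = ‖c₁‖) (h₂ : ‖d₂‖ = ‖c₂‖)
    (h₃ : ‖d₃‖ = ‖c₃‖) (h₄ : ‖d₄‖ = ‖c₄‖)
    (s : ℂ) (k : ZMod n) :
    ‖(d₁ * (if A = k then s else 0) + d₂ * (if B = k then s else 0))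
      + (d₃ * (if C = k then s else 0) + d₄ * (if D = k then s else 0))‖
    = ‖(c₁ * (if A = k then s else 0) + c₂ * (if B = k then s else 0))
      + (c₃ * (if C = k then s else 0) + c₄ * (if D = k then s else 0))‖ := by
  by_cases hA : A = k
  · have hB : ¬ B = k := fun h => hAB (hA.trans h.symm)
    have hC : ¬ C = k := fun h => hAC (hA.trans h.symm)
    have hD : ¬ D = k := fun h => hAD (hA.trans h.symm)
    simp [hA, hB, hC, hD, map_mul, h₁]
  · by_cases hB : B = k
    · have hC : ¬ C = k := fun h => hBC (hB.trans h.symm)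
      have hD : ¬ D = k := fun h => hBD (hB.trans h.symm)
      simp [hA, hB, hC, hD, map_mul, h₂]
    · by_cases hC : C = k
      · have hD : ¬ D = k := fun h => hCD (hC.trans h.symm)
        simp [hA, hB, hC, hD, map_mul, h₃]
      · by_cases hD : D = k
        · simp [hA, hB, hC, hD, map_mul, h₄]
        · simp [hA, hB, hC, hD]

theorem phase_retrieval_fails_with_vanishing_dft (n : ℕ) [NeZero n] (hn : 3 ≤ n)
    (k₀ : ℕ) (hk₀ : 1 < k₀) (hk₀' : k₀ < n - 1) :
    ∃ x y : ZMod n → ℂ,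
      dft x 0 = 0 ∧ dft x (k₀ : ZMod n) = 0 ∧
      dft y 0 = 0 ∧ dft y (k₀ : ZMod n) = 0 ∧
      (∀ k, ‖dft y k‖ = ‖dft x k‖) ∧
      (∀ k, ‖dft (fun t => y t + modulate 1 y t) k‖ =
            ‖dft (fun t => x t + modulate 1 x t) k‖) ∧
      (∀ k, ‖dft (fun t => y t - Complex.I * modulate 1 y t) k‖ =
            ‖dft (fun t => x t - Complex.I * modulate 1 x t) k‖) ∧
      ¬ ∃ c : ℂ, ‖c‖ = 1 ∧ y = fun t => c * x t := by
  have hnZ : 3 ≤ (n : ℤ) := by exact_mod_cast hn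
  have hK1 : 1 < (k₀ : ℤ) := by exact_mod_cast hk₀
  have hn' : k₀ + 2 ≤ n := by omega
  have hK2 : (k₀ : ℤ) < (n : ℤ) - 1 := by
    have : (k₀ : ℤ) + 2 ≤ (n : ℤ) := by exact_mod_cast hn'
    omega
  set K : ℤ := (k₀ : ℤ) with hK
  set x : ZMod n → ℂ := fun t => (1 : ℂ) * Ech n 1 t + (1 : ℂ) * Ech n (K + 1) t with hx
  set y : ZMod n → ℂ := fun t => (1 : ℂ) * Ech n 1 t + (-1 : ℂ) * Ech n (K + 1) t with hy
  -- distinctness facts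
  have hKcast : ((K : ℤ) : ZMod n) = ((k₀ : ℕ) : ZMod n) := by rw [hK]; push_cast; rfl
  have ne10 : ((1 : ℤ) : ZMod n) ≠ ((0 : ℤ) : ZMod n) := int_cast_ne (by omega) (by omega) (by omega)
  have neK10 : ((K + 1 : ℤ) : ZMod n) ≠ ((0 : ℤ) : ZMod n) :=
    int_cast_ne (by omega) (by omega) (by omega)
  have ne1K : ((1 : ℤ) : ZMod n) ≠ ((K : ℤ) : ZMod n) := int_cast_ne (by omega) (by omega) (by omega)
  have neK1K : ((K + 1 : ℤ) : ZMod n) ≠ ((K : ℤ) : ZMod n) :=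
    int_cast_ne (by omega) (by omega) (by omega)
  have ne10' : ((1 : ℤ) : ZMod n) ≠ (0 : ZMod n) := by simpa using ne10
  have neK10' : ((K + 1 : ℤ) : ZMod n) ≠ (0 : ZMod n) := by simpa using neK10
  have ne1K' : ((1 : ℤ) : ZMod n) ≠ ((k₀ : ℕ) : ZMod n) := hKcast ▸ ne1K
  have neK1K' : ((K + 1 : ℤ) : ZMod n) ≠ ((k₀ : ℕ) : ZMod n) := hKcast ▸ neK1K
  have neAB : ((1 : ℤ) : ZMod n) ≠ ((1 + 1 : ℤ) : ZMod n) :=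
    int_cast_ne (by omega) (by omega) (by omega)
  have neAC : ((1 : ℤ) : ZMod n) ≠ ((K + 1 : ℤ) : ZMod n) :=
    int_cast_ne (by omega) (by omega) (by omega)
  have neAD : ((1 : ℤ) : ZMod n) ≠ ((K + 1 + 1 : ℤ) : ZMod n) :=
    int_cast_ne (by omega) (by omega) (by omega)
  have neBC : ((1 + 1 : ℤ) : ZMod n) ≠ ((K + 1 : ℤ) : ZMod n) :=
    int_cast_ne (by omega) (by omega) (by omega)
  have neBD : ((1 + 1 : ℤ) : ZMod n) ≠ ((K + 1 + 1 : ℤ) : ZMod n) :=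
    int_cast_ne (by omega) (by omega) (by omega)
  have neCD : ((K + 1 : ℤ) : ZMod n) ≠ ((K + 1 + 1 : ℤ) : ZMod n) :=
    int_cast_ne (by omega) (by omega) (by omega)
  refine ⟨x, y, ?_, ?_, ?_, ?_, ?_, ?_, ?_, ?_⟩
  · rw [hx, dft_comb2, if_neg ne10', if_neg neK10']; ring
  · rw [hx, dft_comb2, if_neg ne1K', if_neg neK1K']; ring
  · rw [hy, dft_comb2, if_neg ne10', if_neg neK10']; ring
  · rw [hy, dft_comb2, if_neg ne1K', if_neg neK1K']; ring
  · intro k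
    rw [hx, hy, dft_comb2, dft_comb2]
    exact abs_ite2 _ _ neAC _ _ _ _ (by simp) (by simp) _ k
  · intro k
    have hxx : (fun t => x t + modulate 1 x t)
        = fun t : ZMod n => ((1 : ℂ) * Ech n 1 t + (1 : ℂ) * Ech n (1 + 1) t)
          + ((1 : ℂ) * Ech n (K + 1) t + (1 : ℂ) * Ech n ((K + 1) + 1) t) := by
      funext t; rw [hx]; exact comb2_mod 1 1 1 (K + 1) t
    have hyy : (fun t => y t + modulate 1 y t)
        = fun t : ZMod n => ((1 : ℂ) * Ech n 1 t + (1 : ℂ) * Ech n (1 + 1) t)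
          + ((-1 : ℂ) * Ech n (K + 1) t + (-1 : ℂ) * Ech n ((K + 1) + 1) t) := by
      funext t; rw [hy]; exact comb2_mod 1 (-1) 1 (K + 1) t
    rw [hxx, hyy, dft_comb4, dft_comb4]
    exact abs_four _ _ _ _ neAB neAC neAD neBC neBD neCD _ _ _ _ _ _ _ _
      (by simp) (by simp) (by simp) (by simp) _ k
  · intro k
    have hxx : (fun t => x t - Complex.I * modulate 1 x t)
        = fun t : ZMod n => ((1 : ℂ) * Ech n 1 t + (-(Complex.I * 1)) * Ech n (1 + 1) t)
          + ((1 : ℂ) * Ech n (K + 1) t + (-(Complex.I * 1)) * Ech n ((K + 1) + 1) t) := by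
      funext t; rw [hx]; exact comb2_modI 1 1 1 (K + 1) t
    have hyy : (fun t => y t - Complex.I * modulate 1 y t)
        = fun t : ZMod n => ((1 : ℂ) * Ech n 1 t + (-(Complex.I * 1)) * Ech n (1 + 1) t)
          + ((-1 : ℂ) * Ech n (K + 1) t + (-(Complex.I * (-1))) * Ech n ((K + 1) + 1) t) := by
      funext t; rw [hy]; exact comb2_modI 1 (-1) 1 (K + 1) t
    rw [hxx, hyy, dft_comb4, dft_comb4]
    exact abs_four _ _ _ _ neAB neAC neAD neBC neBD neCD _ _ _ _ _ _ _ _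
      (by simp) (by simp) (by simp) (by simp) _ k
  · rintro ⟨c, hc1, hc2⟩
    have hE : ∀ m : ℤ, Ech n m (0 : ZMod n) = 1 := by
      intro m; simp [Ech]
    have h0 := congrFun hc2 (0 : ZMod n)
    rw [hy, hx] at h0
    simp only [hE] at h0
    have hc0 : c = 0 := by
      have h2 : c * 2 = 0 := by linear_combination -h0
      rcases mul_eq_zero.mp h2 with h | h
      · exact h
      · norm_num at h
    rw [hc0] at hc1
    simp at hc1
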